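/- Osgood uniqueness lemma: let Φ : [0,T] → [0,∞) be measurable, F : [0,T] → [0,∞) locally integrable, and μ : [0,∞) → [0,∞) a continuous nondecreasing function with μ(0)=0, μ(r)>0 for r>0, and ∫₀^b dr/μ(r) = ∞ for some b>0. If Φ(t) ≤ ∫₀ᵗ F(τ)μ(Φ(τ))dτ for almost every t ∈ [0,T], then Φ = 0 almost everywhere on [0,T]. -/

import Mathlib

open MeasureTheory Set

lemma osgood_meas {μ : ℝ → ℝ} (hμcont : Continuous μ) :
    Measurable fun r => 1 / μ r :=
  measurable_const.div hμcont.measurable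

lemma osgood_int {μ : ℝ → ℝ} (hμcont : Continuous μ)
    (hμmono : Monotone μ) (hμnonneg : ∀ r, 0 ≤ μ r)
    {ε : ℝ} (R : ℝ) (hε : 0 < μ ε) :
    IntegrableOn (fun r => 1 / μ r) (Set.Icc ε R) := by
  have hc : IntegrableOn (fun _ : ℝ => 1 / μ ε) (Set.Icc ε R) :=
    integrableOn_const measure_Icc_lt_top.ne
  refine Integrable.mono' hc (osgood_meas hμcont).aestronglyMeasurable ?_
  refine (ae_restrict_iff' measurableSet_Icc).2 (Filter.Eventually.of_forall fun r hr => ?_)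
  rw [Real.norm_eq_abs, abs_of_nonneg (one_div_nonneg.2 (hμnonneg r))]
  exact one_div_le_one_div_of_le hε (hμmono hr.1)

lemma osgood_core (μ : ℝ → ℝ) (hμcont : Continuous μ) (hμmono : Monotone μ)
    (hμpos : ∀ r, 0 < r → 0 < μ r) (hμnonneg : ∀ r, 0 ≤ μ r)
    (T ε : ℝ) (hT : 0 ≤ T) (hε : 0 < ε)
    (W B : ℝ → ℝ)
    (hWmono : MonotoneOn W (Set.Icc 0 T))
    (hWcont : ContinuousOn W (Set.Icc 0 T))
    (hWε : ∀ t ∈ Set.Icc 0 T, ε ≤ W t)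
    (hW0 : W 0 = ε)
    (hBcont : ContinuousOn B (Set.Icc 0 T))
    (hB0 : B 0 = 0)
    (hBmono : MonotoneOn B (Set.Icc 0 T))
    (hincr : ∀ s t : ℝ, 0 ≤ s → s ≤ t → t ≤ T → W t - W s ≤ μ (W t) * (B t - B s)) :
    (∫ r in Set.Ioc ε (W T), 1 / μ r) ≤ B T := by
  have hμε : 0 < μ ε := hμpos ε hε
  have hTIcc : T ∈ Set.Icc (0:ℝ) T := ⟨hT, le_rfl⟩
  have h0Icc : (0:ℝ) ∈ Set.Icc (0:ℝ) T := ⟨le_rfl, hT⟩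
  set f : ℝ → ℝ := fun r => 1 / μ r with hf
  have hfnonneg : ∀ r, 0 ≤ f r := fun r => one_div_nonneg.2 (hμnonneg r)
  have hintR : IntegrableOn f (Set.Icc ε (W T)) := osgood_int hμcont hμmono hμnonneg _ hμε
  set A : ℝ → ℝ := fun t => ∫ r in Set.Ioc ε (W t), f r with hA
  -- increments of A
  have key : ∀ x ∈ Set.Icc 0 T, ∀ t ∈ Set.Icc 0 T, x ≤ t →
      A t ≤ A x + μ (W t) / μ (W x) * (B t - B x) := by
    intro x hx t ht hxt
    have hWx : ε ≤ W x := hWε x hx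
    have hWxt : W x ≤ W t := hWmono hx ht hxt
    have hWtT : W t ≤ W T := hWmono ht hTIcc ht.2
    have hμWx : 0 < μ (W x) := hμpos _ (lt_of_lt_of_le hε hWx)
    have hint1 : IntegrableOn f (Set.Ioc ε (W x)) :=
      hintR.mono_set (fun r hr => ⟨hr.1.le, hr.2.trans (hWxt.trans hWtT)⟩)
    have hint2 : IntegrableOn f (Set.Ioc (W x) (W t)) :=
      hintR.mono_set (fun r hr => ⟨hWx.trans hr.1.le, hr.2.trans hWtT⟩)
    have hsplit : A t = A x + ∫ r in Set.Ioc (W x) (W t), f r := by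
      rw [hA]
      simp only
      rw [← Set.Ioc_union_Ioc_eq_Ioc hWx hWxt,
        setIntegral_union (Set.Ioc_disjoint_Ioc_of_le le_rfl) measurableSet_Ioc hint1 hint2]
    have hb2 : (∫ r in Set.Ioc (W x) (W t), f r) ≤ (W t - W x) * (1 / μ (W x)) := by
      have hcint : IntegrableOn (fun _ : ℝ => 1 / μ (W x)) (Set.Ioc (W x) (W t)) :=
        integrableOn_const measure_Ioc_lt_top.ne
      have := setIntegral_mono_on hint2 hcint measurableSet_Ioc
        (fun r hr => one_div_le_one_div_of_le hμWx (hμmono hr.1.le))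
      rw [setIntegral_const, Real.volume_real_Ioc_of_le (by linarith), smul_eq_mul] at this
      exact this
    have hi := hincr x t hx.1 hxt ht.2
    have : (∫ r in Set.Ioc (W x) (W t), f r) ≤ μ (W t) * (B t - B x) / μ (W x) := by
      apply hb2.trans
      rw [mul_one_div, div_le_div_iff₀ hμWx hμWx]
      nlinarith
    rw [hsplit]
    calc A x + ∫ r in Set.Ioc (W x) (W t), f r
        ≤ A x + μ (W t) * (B t - B x) / μ (W x) := by linarith
      _ = A x + μ (W t) / μ (W x) * (B t - B x) := by ring
  -- continuity of A on Icc 0 T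
  have hAcont : ContinuousOn A (Set.Icc 0 T) := by
    have hprim : ContinuousOn (fun y => ∫ r in Set.Ioc ε y, f r) (Set.Icc ε (W T)) :=
      intervalIntegral.continuousOn_primitive hintR
    exact hprim.comp hWcont (fun t ht => ⟨hWε t ht, hWmono ht hTIcc ht.2⟩)
  have hA0 : A 0 = 0 := by rw [hA]; simp [hW0]
  have hBnonneg : ∀ t ∈ Set.Icc 0 T, 0 ≤ B t := fun t ht => hB0 ▸ hBmono h0Icc ht ht.1
  -- main claim
  have main : ∀ c : ℝ, 1 < c → ∀ t ∈ Set.Icc 0 T, A t ≤ c * B t := by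
    intro c hc
    set s : Set ℝ := {t | t ∈ Set.Icc 0 T → A t ≤ c * B t} with hs
    have hclosed : IsClosed (s ∩ Set.Icc 0 T) := by
      have he : s ∩ Set.Icc 0 T
          = Set.Icc 0 T ∩ (fun t => A t - c * B t) ⁻¹' Set.Iic 0 := by
        ext t
        simp only [hs, Set.mem_inter_iff, Set.mem_setOf_eq, Set.mem_preimage, Set.mem_Iic,
          sub_nonpos]
        tauto
      rw [he]
      exact ContinuousOn.preimage_isClosed_of_isClosed
        (hAcont.sub (continuousOn_const.mul hBcont)) isClosed_Icc isClosed_Iic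
    have h0s : (0:ℝ) ∈ s := fun _ => by rw [hA0, hB0]; simp
    have hgt : ∀ x ∈ s ∩ Set.Ico 0 T, ∀ y ∈ Set.Ioi x, (s ∩ Set.Ioc x y).Nonempty := by
      rintro x ⟨hxs, hx0, hxT⟩ y hy
      have hxI : x ∈ Set.Icc 0 T := ⟨hx0, hxT.le⟩
      have hAx : A x ≤ c * B x := hxs hxI
      have hμWx : 0 < μ (W x) := hμpos _ (lt_of_lt_of_le hε (hWε x hxI))
      have hcw : ContinuousWithinAt (fun t => μ (W t)) (Set.Icc 0 T) x :=
        (hμcont.comp_continuousOn hWcont) x hxI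
      have hev : ∀ᶠ t in nhdsWithin x (Set.Icc 0 T), μ (W t) < c * μ (W x) :=
        hcw (Iio_mem_nhds (by nlinarith))
      have hmem : Set.Icc (0:ℝ) T ∈ nhdsWithin x (Set.Ioi x) :=
        Filter.mem_of_superset (Ioc_mem_nhdsGT_of_mem ⟨le_rfl, hxT⟩)
          (fun t ht => ⟨hx0.trans ht.1.le, ht.2⟩)
      have hle : nhdsWithin x (Set.Ioi x) ≤ nhdsWithin x (Set.Icc 0 T) :=
        nhdsWithin_le_of_mem hmem
      have hev2 : ∀ᶠ t in nhdsWithin x (Set.Ioi x),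
          μ (W t) < c * μ (W x) ∧ t ∈ Set.Icc 0 T ∧ t ∈ Set.Ioc x (min y T) :=
        (hev.filter_mono hle).and ((Filter.eventually_mem_set.2 hmem).and
          (Filter.eventually_mem_set.2 (Ioc_mem_nhdsGT_of_mem ⟨le_rfl, lt_min hy hxT⟩)))
      obtain ⟨t, htμ, htI, htxy⟩ := hev2.exists
      refine ⟨t, ?_, htxy.1, htxy.2.trans (min_le_left _ _)⟩
      intro _
      have hkey := key x hxI t htI htxy.1.le
      have hBxt : 0 ≤ B t - B x := sub_nonneg.2 (hBmono hxI htI htxy.1.le)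
      have hdiv : μ (W t) / μ (W x) ≤ c := (div_le_iff₀ hμWx).2 (by nlinarith)
      nlinarith [mul_le_mul_of_nonneg_right hdiv hBxt]
    have hsub := hclosed.Icc_subset_of_forall_exists_gt h0s hgt
    exact fun t ht => hsub ht ht
  -- conclude A T ≤ B T
  have hBT : 0 ≤ B T := hBnonneg T hTIcc
  by_contra hcon
  push_neg at hcon
  rcases eq_or_lt_of_le hBT with hBT0 | hBT0
  · have := main 2 one_lt_two T hTIcc
    rw [← hBT0] at this
    simp only [mul_zero] at this
    have : A T ≤ B T := by rw [← hBT0]; exact this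
    exact absurd this (not_le.2 hcon)
  · set c : ℝ := (A T + B T) / (2 * B T) with hcdef
    have hc : 1 < c := by
      rw [hcdef, lt_div_iff₀ (by positivity)]
      linarith
    have := main c hc T hTIcc
    have hcb : c * B T = (A T + B T) / 2 := by
      rw [hcdef]; field_simp
    rw [hcb] at this
    linarith

/-- Osgood uniqueness lemma: if `Φ : [0,T] → [0,∞)` is measurable and bounded,
`F : [0,T] → [0,∞)` is integrable, `μ` is a continuous nondecreasing Osgood
modulus of continuity (`μ(0) = 0`, `μ(r) > 0` for `r > 0`,
`∫₀^b dr/μ(r) = ∞`), and `Φ(t) ≤ ∫₀ᵗ F(τ)μ(Φ(τ))dτ` for a.e. `t ∈ [0,T]`,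
then `Φ = 0` a.e. on `[0,T]`. -/
theorem stmt13 (T b : ℝ) (hT : 0 < T) (hb : 0 < b)
    (Φ F μ : ℝ → ℝ)
    (hΦmeas : Measurable Φ) (hΦnonneg : ∀ t, 0 ≤ Φ t)
    (hΦbdd : ∃ M : ℝ, ∀ t, Φ t ≤ M)
    (hFint : IntegrableOn F (Set.Icc 0 T)) (hFnonneg : ∀ t, 0 ≤ F t)
    (hμcont : Continuous μ) (hμmono : Monotone μ)
    (hμ0 : μ 0 = 0) (hμpos : ∀ r : ℝ, 0 < r → 0 < μ r)
    (hμnonneg : ∀ r, 0 ≤ μ r)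
    (hOsgood : ¬ IntegrableOn (fun r => 1 / μ r) (Set.Ioc 0 b))
    (hineq : ∀ᵐ t ∂(volume.restrict (Set.Icc 0 T)),
      Φ t ≤ ∫ τ in Set.Ioc 0 t, F τ * μ (Φ τ)) :
    ∀ᵐ t ∂(volume.restrict (Set.Icc 0 T)), Φ t = 0 := by
  obtain ⟨M, hM⟩ := hΦbdd
  set g : ℝ → ℝ := fun τ => F τ * μ (Φ τ) with hg
  have hμΦmeas : Measurable fun τ => μ (Φ τ) := hμcont.measurable.comp hΦmeas
  have hgint : IntegrableOn g (Set.Icc 0 T) := by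
    have h1 : IntegrableOn (fun τ => μ (Φ τ) * F τ) (Set.Icc 0 T) := by
      refine hFint.bdd_mul (c := μ (max M 0)) hμΦmeas.aestronglyMeasurable
        (Filter.Eventually.of_forall fun τ => ?_)
      rw [Real.norm_eq_abs, abs_of_nonneg (hμnonneg _)]
      exact hμmono ((hM τ).trans (le_max_left _ _))
    exact h1.congr_fun (fun τ _ => mul_comm _ _) measurableSet_Icc
  set Ψ : ℝ → ℝ := fun t => ∫ τ in Set.Ioc 0 t, g τ with hΨ
  have hgsub : ∀ s t : ℝ, 0 ≤ s → t ≤ T → IntegrableOn g (Set.Ioc s t) := fun s t hs ht =>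
    hgint.mono_set (fun τ hτ => ⟨hs.trans hτ.1.le, hτ.2.trans ht⟩)
  have hΨadd : ∀ s t : ℝ, 0 ≤ s → s ≤ t → t ≤ T →
      Ψ t = Ψ s + ∫ τ in Set.Ioc s t, g τ := by
    intro s t hs hst htT
    rw [hΨ]
    simp only
    rw [← Set.Ioc_union_Ioc_eq_Ioc hs hst,
      setIntegral_union (Set.Ioc_disjoint_Ioc_of_le le_rfl) measurableSet_Ioc
        (hgsub 0 s le_rfl (hst.trans htT)) (hgsub s t hs htT)]
  have hgnonneg : ∀ τ, 0 ≤ g τ := fun τ => mul_nonneg (hFnonneg τ) (hμnonneg _)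
  have hΨmono : MonotoneOn Ψ (Set.Icc 0 T) := by
    intro s hs t ht hst
    rw [hΨadd s t hs.1 hst ht.2]
    have : 0 ≤ ∫ τ in Set.Ioc s t, g τ :=
      setIntegral_nonneg measurableSet_Ioc fun τ _ => hgnonneg τ
    linarith
  have hΨ0 : Ψ 0 = 0 := by rw [hΨ]; simp
  have hΨnonneg : ∀ t ∈ Set.Icc (0:ℝ) T, 0 ≤ Ψ t := fun t ht =>
    hΨ0 ▸ hΨmono ⟨le_rfl, hT.le⟩ ht ht.1
  have hΨcont : ContinuousOn Ψ (Set.Icc 0 T) := intervalIntegral.continuousOn_primitive hgint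
  have hineq' : ∀ᵐ t ∂(volume.restrict (Set.Icc 0 T)), Φ t ≤ Ψ t := hineq
  -- B
  set B : ℝ → ℝ := fun t => ∫ τ in Set.Ioc 0 t, F τ with hB
  have hFsub : ∀ s t : ℝ, 0 ≤ s → t ≤ T → IntegrableOn F (Set.Ioc s t) := fun s t hs ht =>
    hFint.mono_set (fun τ hτ => ⟨hs.trans hτ.1.le, hτ.2.trans ht⟩)
  have hBadd : ∀ s t : ℝ, 0 ≤ s → s ≤ t → t ≤ T →
      B t = B s + ∫ τ in Set.Ioc s t, F τ := by
    intro s t hs hst htT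
    rw [hB]
    simp only
    rw [← Set.Ioc_union_Ioc_eq_Ioc hs hst,
      setIntegral_union (Set.Ioc_disjoint_Ioc_of_le le_rfl) measurableSet_Ioc
        (hFsub 0 s le_rfl (hst.trans htT)) (hFsub s t hs htT)]
  have hBmono : MonotoneOn B (Set.Icc 0 T) := by
    intro s hs t ht hst
    rw [hBadd s t hs.1 hst ht.2]
    have : 0 ≤ ∫ τ in Set.Ioc s t, F τ :=
      setIntegral_nonneg measurableSet_Ioc fun τ _ => hFnonneg τ
    linarith
  have hB0 : B 0 = 0 := by rw [hB]; simp
  have hBcont : ContinuousOn B (Set.Icc 0 T) := intervalIntegral.continuousOn_primitive hFint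
  -- case split on Ψ T
  by_cases hΨT : Ψ T ≤ 0
  · filter_upwards [hineq', ae_restrict_mem measurableSet_Icc] with t hΦΨ htI
    have h1 : Ψ t ≤ Ψ T := hΨmono htI ⟨hT.le, le_rfl⟩ htI.2
    exact le_antisymm (hΦΨ.trans (h1.trans hΨT)) (hΦnonneg t)
  · exfalso
    push_neg at hΨT
    set a' : ℝ := min (Ψ T) b with ha'def
    have ha' : 0 < a' := lt_min hΨT hb
    have ha'b : a' ≤ b := min_le_right _ _
    -- key estimate
    have hC : ∀ ε : ℝ, 0 < ε → (∫ r in Set.Ioc ε a', 1 / μ r) ≤ B T := by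
      intro ε hε
      set W : ℝ → ℝ := fun t => ε + Ψ t with hW
      have hWε : ∀ t ∈ Set.Icc (0:ℝ) T, ε ≤ W t := fun t ht => by
        have := hΨnonneg t ht; simp only [hW]; linarith
      have hincr : ∀ s t : ℝ, 0 ≤ s → s ≤ t → t ≤ T → W t - W s ≤ μ (W t) * (B t - B s) := by
        intro s t hs hst htT
        have htI : t ∈ Set.Icc (0:ℝ) T := ⟨hs.trans hst, htT⟩
        have h1 : W t - W s = ∫ τ in Set.Ioc s t, g τ := by
          simp only [hW]
          rw [hΨadd s t hs hst htT]; ring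
        have h2 : (∫ τ in Set.Ioc s t, g τ) ≤ ∫ τ in Set.Ioc s t, F τ * μ (W t) := by
          refine setIntegral_mono_ae_restrict (hgsub s t hs htT)
            ((hFsub s t hs htT).mul_const _) ?_
          have hsub2 : Set.Ioc s t ⊆ Set.Icc (0:ℝ) T :=
            fun τ hτ => ⟨hs.trans hτ.1.le, hτ.2.trans htT⟩
          have hae : ∀ᵐ τ ∂(volume.restrict (Set.Ioc s t)), Φ τ ≤ Ψ τ :=
            ae_restrict_of_ae_restrict_of_subset hsub2 hineq'
          filter_upwards [hae, ae_restrict_mem measurableSet_Ioc] with τ hτ1 hτ2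
          have hτI : τ ∈ Set.Icc (0:ℝ) T := ⟨hs.trans hτ2.1.le, hτ2.2.trans htT⟩
          have hΨτ : Ψ τ ≤ Ψ t := hΨmono hτI htI hτ2.2
          have : Φ τ ≤ W t := by
            have := hΨnonneg t htI
            simp only [hW]; linarith
          exact mul_le_mul_of_nonneg_left (hμmono this) (hFnonneg τ)
        have h3 : (∫ τ in Set.Ioc s t, F τ * μ (W t)) = (B t - B s) * μ (W t) := by
          rw [integral_mul_const, hBadd s t hs hst htT]; ring
        rw [h1]
        calc (∫ τ in Set.Ioc s t, g τ) ≤ (B t - B s) * μ (W t) := by rw [← h3]; exact h2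
          _ = μ (W t) * (B t - B s) := mul_comm _ _
      have hcore := osgood_core μ hμcont hμmono hμpos hμnonneg T ε hT.le hε W B
        (fun s hs t ht hst => by
          simp only [hW]
          have := hΨmono hs ht hst; linarith)
        (continuousOn_const.add hΨcont) hWε (by simp [hW, hΨ0])
        hBcont hB0 hBmono hincr
      refine le_trans (setIntegral_mono_set ?_ ?_ ?_) hcore
      · exact (osgood_int hμcont hμmono hμnonneg (W T) (hμpos ε hε)).mono_set
          (fun r hr => ⟨hr.1.le, hr.2⟩)
      · exact Filter.Eventually.of_forall fun r => one_div_nonneg.2 (hμnonneg r)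
      · refine HasSubset.Subset.eventuallyLE (fun r hr => ⟨hr.1, hr.2.trans ?_⟩)
        have : a' ≤ Ψ T := min_le_left _ _
        simp only [hW]; linarith
    -- integrability on (0, a']
    have hfin : IntegrableOn (fun r => 1 / μ r) (Set.Ioc 0 a') := by
      have htend : Filter.Tendsto (fun n : ℕ => a' / (n + 2)) Filter.atTop (nhds 0) := by
        apply Filter.Tendsto.div_atTop tendsto_const_nhds
        exact Filter.tendsto_atTop_add_const_right _ _ tendsto_natCast_atTop_atTop
      have hpos : ∀ n : ℕ, 0 < a' / ((n:ℝ) + 2) := fun n => by positivity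
      refine integrableOn_Ioc_of_intervalIntegral_norm_bounded_left (I := B T)
        (a := fun n : ℕ => a' / (n + 2)) (fun n => ?_) htend
        (Filter.Eventually.of_forall fun n => ?_)
      · exact (osgood_int hμcont hμmono hμnonneg a' (hμpos _ (hpos n))).mono_set
          (fun r hr => ⟨hr.1.le, hr.2⟩)
      · have : (∫ r in Set.Ioc (a' / ((n:ℝ) + 2)) a', ‖1 / μ r‖)
            = ∫ r in Set.Ioc (a' / ((n:ℝ) + 2)) a', 1 / μ r := by
          refine setIntegral_congr_fun measurableSet_Ioc fun r _ => ?_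
          rw [Real.norm_eq_abs, abs_of_nonneg (one_div_nonneg.2 (hμnonneg r))]
        rw [this]
        exact hC _ (hpos n)
    -- integrability on (a', b], contradiction
    have hfin2 : IntegrableOn (fun r => 1 / μ r) (Set.Ioc a' b) :=
      (osgood_int hμcont hμmono hμnonneg b (hμpos _ ha')).mono_set
        (fun r hr => ⟨hr.1.le, hr.2⟩)
    have : IntegrableOn (fun r => 1 / μ r) (Set.Ioc 0 b) := by
      rw [← Set.Ioc_union_Ioc_eq_Ioc ha'.le ha'b]
      exact hfin.union hfin2
    exact hOsgood this
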